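/- There exists a constant c > 0 such that for every n ≥ 1 and every x ∈ V_n∖V₀, the diagonal of the Green function is uniformly bounded: G_n(x,x) ≤ c. -/

import Mathlib

open scoped Classical
open Real Set

noncomputable section

abbrev Pt : Type := ℝ × ℝ

/-- The three corners of the unit triangle. -/
def sierA : Fin 3 → Pt
  | 0 => (0, 0)
  | 1 => (1 / 2, Real.sqrt 3 / 2)
  | 2 => (1, 0)

/-- The three contractions `φᵢ(x) = (x + aᵢ)/2`. -/
def ctr (i : Fin 3) (x : Pt) : Pt :=
  ((x.1 + (sierA i).1) / 2, (x.2 + (sierA i).2) / 2)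

/-- The vertex sets `V n`. -/
def V : ℕ → Finset Pt
  | 0 => {sierA 0, sierA 1, sierA 2}
  | n + 1 => (V n).image (ctr 0) ∪ (V n).image (ctr 1) ∪ (V n).image (ctr 2)

/-- The (ordered) edge sets: `(x, y) ∈ Ed n` iff `{x,y} ∈ E_n`; each undirected
edge appears with both orientations. -/
def Ed : ℕ → Finset (Pt × Pt)
  | 0 => (V 0 ×ˢ V 0).filter fun p => p.1 ≠ p.2
  | n + 1 => Finset.univ.biUnion fun i : Fin 3 => (Ed n).image fun p => (ctr i p.1, ctr i p.2)

/-- `V* = ⋃ n, V n`. -/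
def Vstar : Set Pt := ⋃ n, (V n : Set Pt)

/-- The level-`n` energy `E_n(u,u) = (5/3)^n Σ_{{x,y} ∈ E_n} (u y - u x)²`
(each undirected edge counted once, whence the division by 2). -/
def En (n : ℕ) (u : Pt → ℝ) : ℝ :=
  (5 / 3 : ℝ) ^ n * (∑ p ∈ Ed n, (u p.2 - u p.1) ^ 2) / 2

/-- The discrete Laplacian `Δ_n u (x) = 5^n Σ_{y ∼ₙ x} (u y - u x)`. -/
def lap (n : ℕ) (u : Pt → ℝ) (x : Pt) : ℝ :=
  (5 : ℝ) ^ n * ∑ p ∈ (Ed n).filter (fun p => p.1 = x), (u p.2 - u p.1)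

/-- `g` is the level-`n` Green function with pole at `y`: it solves the
discrete Dirichlet problem `Δ_n g (y) = −3^n`, `Δ_n g (x) = 0` for
`x ∈ V_n ∖ (V₀ ∪ {y})`, and `g = 0` on `V₀ = {a₀,a₁,a₂}`. -/
def IsGreen (n : ℕ) (y : Pt) (g : Pt → ℝ) : Prop :=
  lap n g y = -(3 : ℝ) ^ n ∧
  (∀ x ∈ (V n : Set Pt), x ∉ (V 0 : Set Pt) → x ≠ y → lap n g x = 0) ∧
  ∀ i : Fin 3, g (sierA i) = 0

-- basic lemmas
lemma sqrt3_pos : (0:ℝ) < Real.sqrt 3 := Real.sqrt_pos.2 (by norm_num)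

lemma ctr_fix (i : Fin 3) : ctr i (sierA i) = sierA i := by
  fin_cases i <;> simp [ctr, sierA] <;> constructor <;> ring

lemma ctr_inj (i : Fin 3) : Function.Injective (ctr i) := by
  intro x y h
  simp only [ctr, Prod.mk.injEq] at h
  have h1 : x.1 = y.1 := by linarith [h.1]
  have h2 : x.2 = y.2 := by linarith [h.2]
  exact Prod.ext h1 h2

lemma V_subset_succ : ∀ n, V n ⊆ V (n+1) := by
  intro n
  induction n with
  | zero =>
    intro x hx
    simp only [V, Finset.mem_insert, Finset.mem_singleton] at hx
    have : ∀ i : Fin 3, sierA i ∈ V 1 := by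
      intro i
      show sierA i ∈ (V 0).image (ctr 0) ∪ (V 0).image (ctr 1) ∪ (V 0).image (ctr 2)
      have hi : sierA i ∈ (V 0).image (ctr i) := by
        refine Finset.mem_image.2 ⟨sierA i, ?_, ctr_fix i⟩
        fin_cases i <;> simp [V]
      fin_cases i <;> simp_all [Finset.mem_union]
    rcases hx with h|h|h <;> subst h <;> exact this _
  | succ n ih =>
    show (V n).image (ctr 0) ∪ (V n).image (ctr 1) ∪ (V n).image (ctr 2) ⊆ _
    apply Finset.union_subset (Finset.union_subset ?_ ?_) ?_ <;>
    · intro x hx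
      rcases Finset.mem_image.1 hx with ⟨y, hy, rfl⟩
      show _ ∈ (V (n+1)).image (ctr 0) ∪ (V (n+1)).image (ctr 1) ∪ (V (n+1)).image (ctr 2)
      simp only [Finset.mem_union, Finset.mem_image]
      first
      | exact Or.inl (Or.inl ⟨y, ih hy, rfl⟩)
      | exact Or.inl (Or.inr ⟨y, ih hy, rfl⟩)
      | exact Or.inr ⟨y, ih hy, rfl⟩

lemma mem_V_succ {n : ℕ} {x : Pt} (h : x ∈ V (n+1)) :
    ∃ i : Fin 3, ∃ y ∈ V n, x = ctr i y := by
  have : x ∈ (V n).image (ctr 0) ∪ (V n).image (ctr 1) ∪ (V n).image (ctr 2) := h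
  simp only [Finset.mem_union, Finset.mem_image] at this
  rcases this with (⟨y,hy,rfl⟩|⟨y,hy,rfl⟩)|⟨y,hy,rfl⟩
  exacts [⟨0,y,hy,rfl⟩, ⟨1,y,hy,rfl⟩, ⟨2,y,hy,rfl⟩]

lemma ctr_mem_V {n : ℕ} {x : Pt} (i : Fin 3) (h : x ∈ V n) : ctr i x ∈ V (n+1) := by
  show ctr i x ∈ (V n).image (ctr 0) ∪ (V n).image (ctr 1) ∪ (V n).image (ctr 2)
  simp only [Finset.mem_union, Finset.mem_image]
  fin_cases i
  exacts [Or.inl (Or.inl ⟨x,h,rfl⟩), Or.inl (Or.inr ⟨x,h,rfl⟩), Or.inr ⟨x,h,rfl⟩]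

lemma Ed_mem_V : ∀ n, ∀ p ∈ Ed n, p.1 ∈ V n ∧ p.2 ∈ V n := by
  intro n
  induction n with
  | zero =>
    intro p hp
    have := (Finset.mem_filter.1 hp).1
    exact ⟨(Finset.mem_product.1 this).1, (Finset.mem_product.1 this).2⟩
  | succ n ih =>
    intro p hp
    simp only [Ed, Finset.mem_biUnion, Finset.mem_image] at hp
    rcases hp with ⟨i, -, q, hq, rfl⟩
    exact ⟨ctr_mem_V i (ih q hq).1, ctr_mem_V i (ih q hq).2⟩

lemma Ed_symm : ∀ n, ∀ p ∈ Ed n, (p.2, p.1) ∈ Ed n := by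
  intro n
  induction n with
  | zero =>
    intro p hp
    simp only [Ed, Finset.mem_filter, Finset.mem_product] at hp ⊢
    exact ⟨⟨hp.1.2, hp.1.1⟩, fun h => hp.2 h.symm⟩
  | succ n ih =>
    intro p hp
    simp only [Ed, Finset.mem_biUnion, Finset.mem_image] at hp ⊢
    rcases hp with ⟨i, hi, q, hq, rfl⟩
    exact ⟨i, hi, (q.2, q.1), ih q hq, rfl⟩

lemma Ed_ne : ∀ n, ∀ p ∈ Ed n, p.1 ≠ p.2 := by
  intro n
  induction n with
  | zero => intro p hp; exact (Finset.mem_filter.1 hp).2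
  | succ n ih =>
    intro p hp
    simp only [Ed, Finset.mem_biUnion, Finset.mem_image] at hp
    rcases hp with ⟨i, -, q, hq, rfl⟩
    exact fun h => ih q hq (ctr_inj i h)

def inTri (x : Pt) : Prop :=
  0 ≤ x.2 ∧ x.2 ≤ Real.sqrt 3 * x.1 ∧ Real.sqrt 3 * x.1 + x.2 ≤ Real.sqrt 3

lemma sq3 : Real.sqrt 3 * Real.sqrt 3 = 3 := Real.mul_self_sqrt (by norm_num)

lemma V_inTri : ∀ n, ∀ x ∈ V n, inTri x := by
  intro n
  induction n with
  | zero =>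
    intro x hx
    simp only [V, Finset.mem_insert, Finset.mem_singleton] at hx
    rcases hx with rfl|rfl|rfl <;> refine ⟨?_, ?_, ?_⟩ <;> simp [sierA] <;>
      linarith [sqrt3_pos]
  | succ n ih =>
    intro x hx
    rcases mem_V_succ hx with ⟨i, y, hy, rfl⟩
    have h := ih y hy
    have s3 := sqrt3_pos
    obtain ⟨h1, h2, h3⟩ := h
    fin_cases i <;> simp only [inTri, ctr, sierA] <;> refine ⟨by linarith, ?_, ?_⟩ <;>
      nlinarith [sq3]

lemma tri_c0 {p : Pt} (hp : inTri p) (h : Real.sqrt 3 * p.1 + p.2 ≤ 0) : p = sierA 0 := by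
  obtain ⟨h1, h2, h3⟩ := hp
  have e2 : p.2 = 0 := by linarith
  have e1 : Real.sqrt 3 * p.1 = Real.sqrt 3 * 0 := by rw [e2] at h h2; linarith
  have e1' : p.1 = 0 := mul_left_cancel₀ (ne_of_gt sqrt3_pos) e1
  exact Prod.ext (by simp [sierA, e1']) (by simp [sierA, e2])

lemma tri_c1 {p : Pt} (hp : inTri p) (h : Real.sqrt 3 ≤ 2 * p.2) : p = sierA 1 := by
  obtain ⟨h1, h2, h3⟩ := hp
  have e2 : p.2 = Real.sqrt 3 / 2 := by linarith
  have e1 : Real.sqrt 3 * p.1 = Real.sqrt 3 * (1/2) := by rw [e2] at h2 h3; linarith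
  have e1' : p.1 = 1/2 := mul_left_cancel₀ (ne_of_gt sqrt3_pos) e1
  exact Prod.ext (by simp [sierA, e1']) (by simp [sierA, e2])

lemma tri_c2 {p : Pt} (hp : inTri p) (h : Real.sqrt 3 + p.2 ≤ Real.sqrt 3 * p.1) :
    p = sierA 2 := by
  obtain ⟨h1, h2, h3⟩ := hp
  have e2 : p.2 = 0 := by linarith
  have e1 : Real.sqrt 3 * p.1 = Real.sqrt 3 * 1 := by rw [e2] at h h3; linarith
  have e1' : p.1 = 1 := mul_left_cancel₀ (ne_of_gt sqrt3_pos) e1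
  exact Prod.ext (by simp [sierA, e1']) (by simp [sierA, e2])

lemma tri_extreme {i j : Fin 3} (hij : i ≠ j) {p q : Pt} (hp : inTri p) (hq : inTri q)
    (h1 : p.1 + (sierA i).1 = q.1 + (sierA j).1) (h2 : p.2 + (sierA i).2 = q.2 + (sierA j).2) :
    p = sierA j := by
  obtain ⟨hq1, hq2, hq3⟩ := hq
  fin_cases i <;> fin_cases j
  · exact absurd rfl hij
  · simp only [sierA] at h1 h2
    exact tri_c1 hp (by linarith)
  · simp only [sierA] at h1 h2
    have e : Real.sqrt 3 * p.1 = Real.sqrt 3 * q.1 + Real.sqrt 3 := by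
      have h : p.1 = q.1 + 1 := by linarith
      rw [h]; ring
    exact tri_c2 hp (by linarith)
  · simp only [sierA] at h1 h2
    have e : Real.sqrt 3 * p.1 = Real.sqrt 3 * q.1 - Real.sqrt 3 * (1/2) := by
      have h : p.1 = q.1 - 1/2 := by linarith
      rw [h]; ring
    exact tri_c0 hp (by linarith)
  · exact absurd rfl hij
  · simp only [sierA] at h1 h2
    have e : Real.sqrt 3 * p.1 = Real.sqrt 3 * q.1 + Real.sqrt 3 * (1/2) := by
      have h : p.1 = q.1 + 1/2 := by linarith
      rw [h]; ring
    exact tri_c2 hp (by linarith)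
  · simp only [sierA] at h1 h2
    have e : Real.sqrt 3 * p.1 = Real.sqrt 3 * q.1 - Real.sqrt 3 := by
      have h : p.1 = q.1 - 1 := by linarith
      rw [h]; ring
    exact tri_c0 hp (by linarith)
  · simp only [sierA] at h1 h2
    exact tri_c1 hp (by linarith)
  · exact absurd rfl hij

lemma Ed_disj {n : ℕ} {i j : Fin 3} (hij : i ≠ j) :
    Disjoint ((Ed n).image fun p => (ctr i p.1, ctr i p.2))
      ((Ed n).image fun p => (ctr j p.1, ctr j p.2)) := by
  rw [Finset.disjoint_left]
  rintro a ha hb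
  rcases Finset.mem_image.1 ha with ⟨p, hp, rfl⟩
  rcases Finset.mem_image.1 hb with ⟨q, hq, he⟩
  simp only [Prod.mk.injEq, ctr, Prod.ext_iff] at he
  obtain ⟨⟨e11, e12⟩, e21, e22⟩ := he
  have hpV := Ed_mem_V n p hp
  have hqV := Ed_mem_V n q hq
  have h1 : q.1 = sierA i :=
    tri_extreme hij.symm (V_inTri n _ hqV.1) (V_inTri n _ hpV.1) (by linarith) (by linarith)
  have h2 : q.2 = sierA i :=
    tri_extreme hij.symm (V_inTri n _ hqV.2) (V_inTri n _ hpV.2) (by linarith) (by linarith)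
  exact Ed_ne n q hq (h1.trans h2.symm)

lemma En_decomp (n : ℕ) (u : Pt → ℝ) :
    En (n+1) u = 5/3 * ∑ i : Fin 3, En n (u ∘ ctr i) := by
  have hdisj : (↑(Finset.univ : Finset (Fin 3)) : Set (Fin 3)).PairwiseDisjoint
      (fun i => (Ed n).image fun p => (ctr i p.1, ctr i p.2)) := by
    intro i _ j _ hij
    exact Ed_disj hij
  have h1 : ∑ p ∈ Ed (n+1), (u p.2 - u p.1)^2
      = ∑ i : Fin 3, ∑ p ∈ Ed n, (u (ctr i p.2) - u (ctr i p.1))^2 := by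
    rw [show Ed (n+1) = Finset.univ.biUnion
        (fun i : Fin 3 => (Ed n).image fun p => (ctr i p.1, ctr i p.2)) from rfl,
      Finset.sum_biUnion hdisj]
    refine Finset.sum_congr rfl fun i _ => ?_
    rw [Finset.sum_image]
    intro x _ y _ h
    simp only [Prod.mk.injEq] at h
    exact Prod.ext (ctr_inj i h.1) (ctr_inj i h.2)
  simp only [En, h1, Function.comp, Finset.mul_sum, Finset.sum_div]
  exact Finset.sum_congr rfl fun i _ => Finset.sum_congr rfl fun p _ => by ring

lemma ne01 : sierA 0 ≠ sierA 1 := by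
  intro h
  have := congrArg Prod.fst h
  simp [sierA] at this

lemma ne02 : sierA 0 ≠ sierA 2 := by
  intro h
  have := congrArg Prod.fst h
  simp [sierA] at this

lemma ne12 : sierA 1 ≠ sierA 2 := by
  intro h
  have := congrArg Prod.fst h
  simp [sierA] at this

lemma sum_V0 (f : Pt → ℝ) : ∑ x ∈ V 0, f x = f (sierA 0) + f (sierA 1) + f (sierA 2) := by
  rw [show V 0 = ({sierA 0, sierA 1, sierA 2} : Finset Pt) from rfl]
  rw [Finset.sum_insert (by simp [ne01, ne02]), Finset.sum_insert (by simp [ne12]),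
    Finset.sum_singleton]
  ring

lemma En0_eq (u : Pt → ℝ) :
    En 0 u = (u (sierA 1) - u (sierA 0))^2 + (u (sierA 2) - u (sierA 1))^2
      + (u (sierA 0) - u (sierA 2))^2 := by
  have key : ∑ p ∈ Ed 0, (u p.2 - u p.1)^2
      = ∑ x ∈ V 0, ∑ y ∈ V 0, (if x ≠ y then (u y - u x)^2 else 0) := by
    rw [show Ed 0 = (V 0 ×ˢ V 0).filter (fun p => p.1 ≠ p.2) from rfl, Finset.sum_filter,
      Finset.sum_product]
  rw [En, key, sum_V0, sum_V0, sum_V0, sum_V0]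
  simp [ne01, ne02, ne12, ne01.symm, ne02.symm, ne12.symm]
  ring

lemma hexineq (x0 x1 x2 m01 m02 m12 : ℝ) :
    (x1-x0)^2 + (x2-x1)^2 + (x0-x2)^2 ≤
      5/3*((m01-x0)^2+(m02-m01)^2+(x0-m02)^2 + ((x1-m01)^2+(m12-x1)^2+(m01-m12)^2)
        + ((m12-m02)^2+(x2-m12)^2+(m02-x2)^2)) := by
  nlinarith [sq_nonneg (5*m01 - 2*x0 - 2*x1 - x2), sq_nonneg (5*m02 - 2*x0 - x1 - 2*x2),
    sq_nonneg (5*m12 - x0 - 2*x1 - 2*x2), sq_nonneg (5*m01 - 5*m02 - x1 + x2),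
    sq_nonneg (5*m01 - 5*m12 - x0 + x2), sq_nonneg (5*m02 - 5*m12 - x0 + x1)]

lemma ctr_comm (i j : Fin 3) : ctr i (sierA j) = ctr j (sierA i) := by
  fin_cases i <;> fin_cases j <;> refine Prod.ext ?_ ?_ <;> simp [ctr, sierA] <;> ring

lemma En_zero_le (u : Pt → ℝ) : En 0 u ≤ 5/3 * ∑ i : Fin 3, En 0 (u ∘ ctr i) := by
  simp only [Fin.sum_univ_three, En0_eq, Function.comp_apply, ctr_fix]
  rw [show ctr 1 (sierA 0) = ctr 0 (sierA 1) from (ctr_comm 0 1).symm,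
    show ctr 2 (sierA 0) = ctr 0 (sierA 2) from (ctr_comm 0 2).symm,
    show ctr 2 (sierA 1) = ctr 1 (sierA 2) from (ctr_comm 1 2).symm]
  have := hexineq (u (sierA 0)) (u (sierA 1)) (u (sierA 2)) (u (ctr 0 (sierA 1)))
    (u (ctr 0 (sierA 2))) (u (ctr 1 (sierA 2)))
  linarith

lemma En_mono : ∀ n (u : Pt → ℝ), En n u ≤ En (n+1) u := by
  intro n
  induction n with
  | zero => intro u; rw [En_decomp]; exact En_zero_le u
  | succ n ih =>
    intro u
    rw [En_decomp (n+1) u, En_decomp n u]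
    have h : ∑ i : Fin 3, En n (u ∘ ctr i) ≤ ∑ i : Fin 3, En (n+1) (u ∘ ctr i) :=
      Finset.sum_le_sum fun i _ => ih _
    linarith

lemma En_le {k n : ℕ} (h : k ≤ n) (u : Pt → ℝ) : En k u ≤ En n u :=
  monotone_nat_of_le_succ (fun m => En_mono m u) h

lemma En_nonneg (n : ℕ) (u : Pt → ℝ) : 0 ≤ En n u := by
  unfold En
  have h : 0 ≤ ∑ p ∈ Ed n, (u p.2 - u p.1)^2 := Finset.sum_nonneg fun p _ => sq_nonneg _
  positivity

lemma sierA_mem_V0 (i : Fin 3) : sierA i ∈ V 0 := by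
  fin_cases i <;> simp [V]

lemma mem_Ed_succ {n : ℕ} {p : Pt × Pt} (i : Fin 3) (hp : p ∈ Ed n) :
    (ctr i p.1, ctr i p.2) ∈ Ed (n+1) := by
  rw [show Ed (n+1) = Finset.univ.biUnion
      (fun j : Fin 3 => (Ed n).image fun q => (ctr j q.1, ctr j q.2)) from rfl]
  exact Finset.mem_biUnion.2 ⟨i, Finset.mem_univ i, Finset.mem_image.2 ⟨p, hp, rfl⟩⟩

lemma adj : ∀ n, ∀ y ∈ V (n+1), ∃ z ∈ V n, y = z ∨ (y, z) ∈ Ed (n+1) := by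
  intro n
  induction n with
  | zero =>
    intro y hy
    rcases mem_V_succ hy with ⟨i, w, hw, rfl⟩
    by_cases hwi : w = sierA i
    · exact ⟨sierA i, sierA_mem_V0 i, Or.inl (by rw [hwi, ctr_fix])⟩
    · refine ⟨sierA i, sierA_mem_V0 i, Or.inr ?_⟩
      have h0 : (w, sierA i) ∈ Ed 0 := by
        simp only [Ed, Finset.mem_filter, Finset.mem_product]
        exact ⟨⟨hw, sierA_mem_V0 i⟩, hwi⟩
      have := mem_Ed_succ i h0
      rwa [ctr_fix] at this
  | succ n ih =>
    intro y hy
    rcases mem_V_succ hy with ⟨i, w, hw, rfl⟩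
    rcases ih w hw with ⟨z, hz, hcase⟩
    refine ⟨ctr i z, ctr_mem_V i hz, ?_⟩
    rcases hcase with rfl|he
    · exact Or.inl rfl
    · refine Or.inr ?_
      exact mem_Ed_succ i he

lemma edge_bound {n : ℕ} {p : Pt × Pt} (hp : p ∈ Ed n) (u : Pt → ℝ) :
    (u p.2 - u p.1)^2 ≤ 2 * (3/5)^n * En n u := by
  have h1 : (u p.2 - u p.1)^2 ≤ ∑ q ∈ Ed n, (u q.2 - u q.1)^2 :=
    Finset.single_le_sum (f := fun q => (u q.2 - u q.1)^2) (fun q _ => sq_nonneg _) hp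
  have key : (3/5:ℝ)^n * (5/3)^n = 1 := by rw [← mul_pow]; norm_num
  have e : 2*(3/5:ℝ)^n * En n u = ∑ q ∈ Ed n, (u q.2 - u q.1)^2 := by
    unfold En
    linear_combination (∑ q ∈ Ed n, (u q.2 - u q.1)^2) * key
  rw [e]
  exact h1

def bb : ℕ → ℝ := fun n => ∑ k ∈ Finset.range n, Real.sqrt 2 * Real.sqrt (3/5) ^ (k+1)

lemma bb_nonneg (n : ℕ) : 0 ≤ bb n :=
  Finset.sum_nonneg fun k _ => by positivity

lemma chain : ∀ n (u : Pt → ℝ), (∀ i, u (sierA i) = 0) → ∀ y ∈ V n,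
    |u y| ≤ bb n * Real.sqrt (En n u) := by
  intro n
  induction n with
  | zero =>
    intro u hu y hy
    simp only [V, Finset.mem_insert, Finset.mem_singleton] at hy
    rcases hy with rfl|rfl|rfl <;> rw [hu] <;> simp [bb]
  | succ n ih =>
    intro u hu y hy
    have hEmono : En n u ≤ En (n+1) u := En_mono n u
    have hEn : 0 ≤ En n u := En_nonneg n u
    have sqmono : Real.sqrt (En n u) ≤ Real.sqrt (En (n+1) u) := Real.sqrt_le_sqrt hEmono
    have hbn : 0 ≤ bb n := bb_nonneg n
    rcases adj n y hy with ⟨z, hz, hcase⟩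
    have hz' := ih u hu z hz
    have step : |u y - u z| ≤
        Real.sqrt 2 * Real.sqrt (3/5) ^ (n+1) * Real.sqrt (En (n+1) u) := by
      rcases hcase with rfl|he
      · simp only [sub_self, abs_zero]
        positivity
      · have hb := edge_bound he u
        simp only at hb
        have hc : (0:ℝ) ≤ Real.sqrt 2 * Real.sqrt (3/5) ^ (n+1) := by positivity
        have hr : (Real.sqrt 2 * Real.sqrt (3/5) ^ (n+1))^2 = 2 * (3/5)^(n+1) := by
          have h35 : (Real.sqrt (3/5) ^ (n+1))^2 = ((Real.sqrt (3/5))^2)^(n+1) := by ring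
          rw [mul_pow, h35, Real.sq_sqrt (by norm_num : (0:ℝ) ≤ 2),
            Real.sq_sqrt (by norm_num : (0:ℝ) ≤ 3/5)]
        have h1 : |u y - u z| = Real.sqrt ((u z - u y)^2) := by
          rw [show (u z - u y)^2 = (u y - u z)^2 by ring, Real.sqrt_sq_eq_abs]
        rw [h1]
        calc Real.sqrt ((u z - u y)^2) ≤ Real.sqrt (2 * (3/5)^(n+1) * En (n+1) u) :=
              Real.sqrt_le_sqrt hb
          _ = Real.sqrt ((Real.sqrt 2 * Real.sqrt (3/5) ^ (n+1))^2 * En (n+1) u) := by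
              rw [hr]
          _ = Real.sqrt 2 * Real.sqrt (3/5) ^ (n+1) * Real.sqrt (En (n+1) u) := by
              rw [Real.sqrt_mul (sq_nonneg _), Real.sqrt_sq hc]
    have tri : |u y| ≤ |u z| + |u y - u z| := by
      have h := abs_add_le (u z) (u y - u z)
      simpa using h
    have hfin : bb n * Real.sqrt (En n u) + Real.sqrt 2 * Real.sqrt (3/5) ^ (n+1)
        * Real.sqrt (En (n+1) u) ≤ bb (n+1) * Real.sqrt (En (n+1) u) := by
      have h1 : bb n * Real.sqrt (En n u) ≤ bb n * Real.sqrt (En (n+1) u) :=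
        mul_le_mul_of_nonneg_left sqmono hbn
      have h2 : bb (n+1) = bb n + Real.sqrt 2 * Real.sqrt (3/5) ^ (n+1) := by
        rw [bb, bb, Finset.sum_range_succ]
      rw [h2, add_mul]; linarith [h1]
    linarith [tri, hz', step]

lemma sqrt35_lt_one : Real.sqrt (3/5) < 1 := by
  have h := Real.sqrt_lt_sqrt (by norm_num : (0:ℝ) ≤ 3/5) (by norm_num : (3/5:ℝ) < 1)
  simpa using h

lemma bb_le (n : ℕ) :
    bb n ≤ Real.sqrt 2 * Real.sqrt (3/5) / (1 - Real.sqrt (3/5)) := by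
  have hr0 : (0:ℝ) ≤ Real.sqrt (3/5) := Real.sqrt_nonneg _
  have hr1 : Real.sqrt (3/5) < 1 := sqrt35_lt_one
  have hne : Real.sqrt (3/5) ≠ 1 := ne_of_lt hr1
  have hg : ∑ k ∈ Finset.range n, Real.sqrt (3/5) ^ k ≤ 1/(1 - Real.sqrt (3/5)) := by
    rw [geom_sum_eq hne]
    have e : (Real.sqrt (3/5)^n - 1)/(Real.sqrt (3/5) - 1)
        = (1 - Real.sqrt (3/5)^n)/(1 - Real.sqrt (3/5)) := by
      rw [div_eq_div_iff (by linarith) (by linarith)]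
      ring
    rw [e, div_le_div_iff₀ (by linarith) (by linarith)]
    nlinarith [pow_nonneg hr0 n]
  have hbb : bb n = Real.sqrt 2 * Real.sqrt (3/5)
      * ∑ k ∈ Finset.range n, Real.sqrt (3/5) ^ k := by
    rw [bb, Finset.mul_sum]
    exact Finset.sum_congr rfl fun k _ => by ring
  rw [hbb]
  have h2 : (0:ℝ) ≤ Real.sqrt 2 * Real.sqrt (3/5) := by positivity
  calc Real.sqrt 2 * Real.sqrt (3/5) * ∑ k ∈ Finset.range n, Real.sqrt (3/5) ^ k
      ≤ Real.sqrt 2 * Real.sqrt (3/5) * (1/(1 - Real.sqrt (3/5))) :=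
        mul_le_mul_of_nonneg_left hg h2
    _ = Real.sqrt 2 * Real.sqrt (3/5) / (1 - Real.sqrt (3/5)) := by ring

lemma sum_lap (n : ℕ) (g : Pt → ℝ) :
    ∑ x ∈ V n, g x * lap n g x
      = -(5:ℝ)^n * (∑ p ∈ Ed n, (g p.2 - g p.1)^2) / 2 := by
  have hfib : ∑ x ∈ V n, ∑ p ∈ (Ed n).filter (fun p => p.1 = x), g p.1 * (g p.2 - g p.1)
      = ∑ p ∈ Ed n, g p.1 * (g p.2 - g p.1) :=
    Finset.sum_fiberwise_of_maps_to (fun p hp => (Ed_mem_V n p hp).1) _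
  have hA : ∑ x ∈ V n, g x * lap n g x
      = (5:ℝ)^n * ∑ p ∈ Ed n, g p.1 * (g p.2 - g p.1) := by
    rw [← hfib, Finset.mul_sum]
    refine Finset.sum_congr rfl fun x _ => ?_
    have e : ∑ p ∈ (Ed n).filter (fun p => p.1 = x), g p.1 * (g p.2 - g p.1)
        = ∑ p ∈ (Ed n).filter (fun p => p.1 = x), g x * (g p.2 - g p.1) := by
      refine Finset.sum_congr rfl fun p hp => ?_
      rw [(Finset.mem_filter.1 hp).2]
    rw [e, ← Finset.mul_sum]
    unfold lap
    ring
  have hswap : ∑ p ∈ Ed n, g p.2 * (g p.2 - g p.1)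
      = ∑ p ∈ Ed n, g p.1 * (g p.1 - g p.2) :=
    Finset.sum_nbij' (i := Prod.swap) (j := Prod.swap)
      (fun p hp => Ed_symm n p hp) (fun p hp => Ed_symm n p hp)
      (fun p _ => Prod.swap_swap p) (fun p _ => Prod.swap_swap p)
      (fun p _ => rfl)
  have hsq : ∑ p ∈ Ed n, (g p.2 - g p.1)^2
      = -2 * ∑ p ∈ Ed n, g p.1 * (g p.2 - g p.1) := by
    have expand : ∑ p ∈ Ed n, (g p.2 - g p.1)^2
        = ∑ p ∈ Ed n, g p.2 * (g p.2 - g p.1) - ∑ p ∈ Ed n, g p.1 * (g p.2 - g p.1) := by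
      rw [← Finset.sum_sub_distrib]
      exact Finset.sum_congr rfl fun p _ => by ring
    have hneg : ∑ p ∈ Ed n, g p.1 * (g p.1 - g p.2)
        = -∑ p ∈ Ed n, g p.1 * (g p.2 - g p.1) := by
      rw [← Finset.sum_neg_distrib]
      exact Finset.sum_congr rfl fun p _ => by ring
    rw [expand, hswap, hneg]
    ring
  rw [hA, hsq]
  ring

lemma green_energy {n : ℕ} {y : Pt} {g : Pt → ℝ} (hy : y ∈ V n) (hG : IsGreen n y g) :
    En n g = g y := by
  obtain ⟨hpole, hharm, hbdry⟩ := hG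
  have hsum : ∑ x ∈ V n, g x * lap n g x = g y * lap n g y := by
    refine Finset.sum_eq_single_of_mem y hy fun x hx hxy => ?_
    by_cases hx0 : x ∈ (V 0 : Set Pt)
    · have : x = sierA 0 ∨ x = sierA 1 ∨ x = sierA 2 := by simpa [V] using hx0
      rcases this with rfl|rfl|rfl <;> simp [hbdry]
    · rw [hharm x (Finset.mem_coe.2 hx) hx0 hxy]
      ring
  have hS := sum_lap n g
  rw [hsum, hpole] at hS
  have h5 : (5:ℝ)^n ≠ 0 := by positivity
  have h3 : (3:ℝ)^n ≠ 0 := by positivity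
  have hSeq : ∑ p ∈ Ed n, (g p.2 - g p.1)^2 = 2 * (3:ℝ)^n * g y / 5^n := by
    field_simp at hS ⊢
    linarith [hS]
  unfold En
  rw [hSeq, div_pow]
  field_simp


/-- The diagonal of the Green function is uniformly bounded: there is `c > 0`
such that `G_n(x,x) ≤ c` for all `n ≥ 1` and all `x ∈ V_n ∖ V₀`. -/
theorem green_diagonal_uniformly_bounded :
    ∃ c : ℝ, 0 < c ∧
      ∀ n : ℕ, 1 ≤ n →
        ∀ x ∈ (V n : Set Pt), x ∉ (V 0 : Set Pt) →
          ∀ g : Pt → ℝ, IsGreen n x g → g x ≤ c := by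
  refine ⟨(Real.sqrt 2 * Real.sqrt (3/5) / (1 - Real.sqrt (3/5)))^2 + 1, by positivity, ?_⟩
  intro n hn x hx hx0 g hG
  set K := Real.sqrt 2 * Real.sqrt (3/5) / (1 - Real.sqrt (3/5)) with hKdef
  have hr1 : Real.sqrt (3/5) < 1 := sqrt35_lt_one
  have hK0 : 0 ≤ K := by
    apply div_nonneg (by positivity)
    linarith
  have hxV : x ∈ V n := hx
  have hE := green_energy hxV hG
  have hEnn : 0 ≤ En n g := En_nonneg n g
  have hgy : 0 ≤ g x := hE ▸ hEnn
  have hchain := chain n g hG.2.2 x hxV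
  rw [hE] at hchain
  have hbbK : bb n ≤ K := bb_le n
  have h2 : |g x| ≤ K * Real.sqrt (g x) :=
    le_trans hchain (mul_le_mul_of_nonneg_right hbbK (Real.sqrt_nonneg _))
  have h3 : g x ≤ K * Real.sqrt (g x) := (le_abs_self _).trans h2
  have h4 : Real.sqrt (g x)^2 = g x := Real.sq_sqrt hgy
  nlinarith [sq_nonneg (Real.sqrt (g x) - K), h3, h4]

end
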